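/- Let K be a field with char(K) ≠ 2,3, d ∈ K*, k ∈ K with k² ≠ d, b ∈ K*, and γ ∈ K such that dkγ³ + 3dγ² + 3kγ + 1 ≠ 0. Let h be the Möbius transformation represented by the matrix [[1, -bdγ], [-γ, b]]. Then h⁻¹ ∘ θ_{d,k} ∘ h = θ_{b²d, k'}, where k' = b(d²γ³ + 3dkγ² + 3dγ + k)/(dkγ³ + 3dγ² + 3kγ + 1). -/

import Mathlib

set_option maxHeartbeats 1000000 in
theorem stmt15 (K : Type*) [Field K] (h2 : (2 : K) ≠ 0) (h3 : (3 : K) ≠ 0)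
    (d k b γ : K) (hd : d ≠ 0) (hkd : k ^ 2 ≠ d) (hb : b ≠ 0)
    (hγ : d * k * γ ^ 3 + 3 * d * γ ^ 2 + 3 * k * γ + 1 ≠ 0)
    (k' : K)
    (hk' : k' = b * (d ^ 2 * γ ^ 3 + 3 * d * k * γ ^ 2 + 3 * d * γ + k)
      / (d * k * γ ^ 3 + 3 * d * γ ^ 2 + 3 * k * γ + 1)) :
    ∀ z : K, -γ * z + b ≠ 0 →
      ((z - b * d * γ) / (-γ * z + b)) ^ 2
          - 2 * k * ((z - b * d * γ) / (-γ * z + b)) + d ≠ 0 →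
      z ^ 2 - 2 * k' * z + b ^ 2 * d ≠ 0 →
      -γ * ((k' * z ^ 2 - 2 * (b ^ 2 * d) * z + (b ^ 2 * d) * k')
          / (z ^ 2 - 2 * k' * z + b ^ 2 * d)) + b ≠ 0 →
      (k * ((z - b * d * γ) / (-γ * z + b)) ^ 2
          - 2 * d * ((z - b * d * γ) / (-γ * z + b)) + d * k)
        / (((z - b * d * γ) / (-γ * z + b)) ^ 2
          - 2 * k * ((z - b * d * γ) / (-γ * z + b)) + d)
      = ((k' * z ^ 2 - 2 * (b ^ 2 * d) * z + (b ^ 2 * d) * k')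
            / (z ^ 2 - 2 * k' * z + b ^ 2 * d) - b * d * γ)
        / (-γ * ((k' * z ^ 2 - 2 * (b ^ 2 * d) * z + (b ^ 2 * d) * k')
            / (z ^ 2 - 2 * k' * z + b ^ 2 * d)) + b) := by
  intro z hB hden1 hden2 hden3
  have hK : k' * (d * k * γ ^ 3 + 3 * d * γ ^ 2 + 3 * k * γ + 1)
      = b * (d ^ 2 * γ ^ 3 + 3 * d * k * γ ^ 2 + 3 * d * γ + k) := by
    rw [hk', div_mul_cancel₀ _ hγ]
  clear hk'
  set A := z - b * d * γ with hA
  set B := -γ * z + b with hBdef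
  set Nq := k' * z ^ 2 - 2 * (b ^ 2 * d) * z + (b ^ 2 * d) * k' with hNq
  set Dq := z ^ 2 - 2 * k' * z + b ^ 2 * d with hDq
  have e1 : k * (A / B) ^ 2 - 2 * d * (A / B) + d * k
      = (k * A ^ 2 - 2 * d * A * B + d * k * B ^ 2) / B ^ 2 := by
    field_simp
  have e2 : (A / B) ^ 2 - 2 * k * (A / B) + d
      = (A ^ 2 - 2 * k * A * B + d * B ^ 2) / B ^ 2 := by
    field_simp
  have hDL : A ^ 2 - 2 * k * A * B + d * B ^ 2 ≠ 0 := by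
    intro h
    apply hden1
    rw [e2, h, zero_div]
  have e3 : Nq / Dq - b * d * γ = (Nq - b * d * γ * Dq) / Dq := by
    field_simp
  have e4 : -γ * (Nq / Dq) + b = (-γ * Nq + b * Dq) / Dq := by
    field_simp
  have hDR : -γ * Nq + b * Dq ≠ 0 := by
    intro h
    apply hden3
    rw [e4, h, zero_div]
  have e5 : ∀ n dd c : K, c ≠ 0 → dd ≠ 0 → n / c / (dd / c) = n / dd := by
    intro n dd c hc hdd; field_simp
  rw [e1, e2, e3, e4, e5 _ _ _ (pow_ne_zero 2 hB) hDL, e5 _ _ _ hden2 hDR]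
  rw [div_eq_div_iff hDL hDR]
  linear_combination (-(z ^ 2 - d * b ^ 2) ^ 2) * hK
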